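/- Let G be a connected finite simple graph of order n ≥ 13 with degree sequence d₁ ≤ ⋯ ≤ d_n satisfying the weak Chvátal condition (for all 1 ≤ i < n/2, d_i ≥ i + 1 or d_{n−i} ≥ n − i − 1), having at most one vertex of degree 1, and with m(G,2) > 2. Let L = {v ∈ V(G) : d(v) ≥ (n−1)/2}, and let I be a set of maximum cardinality among all closures ⟨A⟩ of two-element sets A ⊆ V(G) under 2-neighbor bootstrap percolation that have nonempty intersection with L. Then |I| < n/2. -/

import Mathlib

open Finset
open scoped Classical

/-- One step of the `r`-neighbor bootstrap percolation process: all currently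
active vertices stay active, and every vertex with at least `r` active
neighbors becomes active. -/
noncomputable def bootStep {V : Type*} [Fintype V] (G : SimpleGraph V) (r : ℕ)
    (A : Finset V) : Finset V :=
  A ∪ Finset.univ.filter (fun v => r ≤ (G.neighborFinset v ∩ A).card)

/-- The closure of `A` under `r`-neighbor bootstrap percolation, i.e. `⋃ₜ Aₜ`.
Since the process is monotone on a finite vertex set, iterating `|V|` times
reaches the fixed point. -/
noncomputable def bootClosure {V : Type*} [Fintype V] (G : SimpleGraph V) (r : ℕ)
    (A : Finset V) : Finset V :=
  (bootStep G r)^[Fintype.card V] A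

/-- `G` `r`-percolates from the initially active set `A`. -/
def Percolates {V : Type*} [Fintype V] (G : SimpleGraph V) (r : ℕ)
    (A : Finset V) : Prop :=
  ∃ t : ℕ, (bootStep G r)^[t] A = Finset.univ

/-- `m(G, r)`: the minimum size of an `r`-contagious set in `G`. -/
noncomputable def minContagious {V : Type*} [Fintype V] (G : SimpleGraph V) (r : ℕ) : ℕ :=
  sInf {k : ℕ | ∃ A : Finset V, A.card = k ∧ Percolates G r A}

section Infra

variable {V : Type*} [Fintype V] {G : SimpleGraph V} {r : ℕ} {A : Finset V}

lemma subset_bootStep : A ⊆ bootStep G r A := Finset.subset_union_left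

lemma subset_bootClosure : A ⊆ bootClosure G r A := by
  unfold bootClosure
  generalize Fintype.card V = k
  induction k with
  | zero => exact subset_rfl
  | succ k ih =>
      rw [Function.iterate_succ_apply']
      exact ih.trans subset_bootStep

lemma bootClosure_fixed : bootStep G r (bootClosure G r A) = bootClosure G r A := by
  set f := bootStep G r with hf
  have hsub : ∀ S : Finset V, S ⊆ f S := fun S => Finset.subset_union_left
  have stab : ∃ k ≤ Fintype.card V, f (f^[k] A) = f^[k] A := by
    by_contra hcon
    push_neg at hcon
    have grow : ∀ k, k ≤ Fintype.card V + 1 → k ≤ (f^[k] A).card := by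
      intro k
      induction k with
      | zero => intro _; exact Nat.zero_le _
      | succ k ih =>
          intro hk
          have h1 : k ≤ (f^[k] A).card := ih (by omega)
          have h2 : f^[k] A ⊂ f^[k+1] A := by
            rw [Function.iterate_succ_apply']
            exact Finset.ssubset_iff_subset_ne.2 ⟨hsub _, fun h => hcon k (by omega) h.symm⟩
          have := Finset.card_lt_card h2
          omega
    have h := grow (Fintype.card V + 1) le_rfl
    have hle : (f^[Fintype.card V + 1] A).card ≤ Fintype.card V := by
      have := Finset.card_le_univ (f^[Fintype.card V + 1] A)
      simpa using this
    omega
  obtain ⟨k, hk, hfix⟩ := stab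
  have eventually : ∀ m, k ≤ m → f^[m] A = f^[k] A := by
    intro m hm
    induction m with
    | zero => simp_all
    | succ m ih =>
        rcases Nat.lt_or_ge k (m+1) with h | h
        · have hm' : k ≤ m := by omega
          rw [Function.iterate_succ_apply', ih hm', hfix]
        · have : k = m + 1 := by omega
          rw [this]
  have h1 : bootClosure G r A = f^[k] A := eventually _ hk
  rw [h1, hfix]

lemma notmem_closure_card {v : V}
    (hv : v ∉ bootClosure G 2 A) :
    (G.neighborFinset v ∩ bootClosure G 2 A).card ≤ 1 := by
  by_contra h
  push_neg at h
  have : v ∈ bootStep G 2 (bootClosure G 2 A) := by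
    refine Finset.mem_union_right _ ?_
    simp only [Finset.mem_filter, Finset.mem_univ, true_and]
    omega
  rw [bootClosure_fixed] at this
  exact hv this

lemma two_mem {u w z : V}
    (hu : u ∈ bootClosure G 2 A) (hw : w ∈ bootClosure G 2 A) (huw : u ≠ w)
    (h1 : G.Adj z u) (h2 : G.Adj z w) : z ∈ bootClosure G 2 A := by
  by_contra hz
  have hc := notmem_closure_card hz
  have hsub : ({u, w} : Finset V) ⊆ G.neighborFinset z ∩ bootClosure G 2 A := by
    intro x hx
    rcases Finset.mem_insert.1 hx with h | h
    · subst h; exact Finset.mem_inter.2 ⟨(SimpleGraph.mem_neighborFinset _ _ _).2 h1, hu⟩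
    · rw [Finset.mem_singleton] at h; subst h
      exact Finset.mem_inter.2 ⟨(SimpleGraph.mem_neighborFinset _ _ _).2 h2, hw⟩
  have := Finset.card_le_card hsub
  rw [Finset.card_pair huw] at this
  omega

lemma seed_mem₁ {u v : V} : u ∈ bootClosure G 2 {u, v} :=
  subset_bootClosure (by simp)

lemma seed_mem₂ {u v : V} : v ∈ bootClosure G 2 {u, v} :=
  subset_bootClosure (by simp)

end Infra

section Counting

variable {V : Type*} [Fintype V] (G : SimpleGraph V) {n : ℕ}

lemma deg_partition (I : Finset V) (v : V) :
    (G.neighborFinset v ∩ I).card + (G.neighborFinset v ∩ (univ \ I)).card = G.degree v := by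
  have h1 : G.neighborFinset v ∩ (univ \ I) = G.neighborFinset v \ I := by
    ext x; simp only [Finset.mem_sdiff, Finset.mem_inter, Finset.mem_univ, true_and]
  rw [h1, Finset.card_inter_add_card_sdiff]
  rfl

lemma sum_inter_comm (S T : Finset V) :
    (∑ s ∈ S, (G.neighborFinset s ∩ T).card) = ∑ t ∈ T, (G.neighborFinset t ∩ S).card := by
  have key : ∀ (S T : Finset V), (∑ s ∈ S, (G.neighborFinset s ∩ T).card)
      = ∑ s ∈ S, ∑ t ∈ T, (if G.Adj s t then 1 else 0) := by
    intro S T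
    refine Finset.sum_congr rfl fun s _ => ?_
    have : G.neighborFinset s ∩ T = T.filter (fun t => G.Adj s t) := by
      ext x; simp [Finset.mem_inter, Finset.mem_filter, SimpleGraph.mem_neighborFinset]; tauto
    rw [this, Finset.card_filter]
  rw [key, key, Finset.sum_comm]
  refine Finset.sum_congr rfl fun t _ => Finset.sum_congr rfl fun s _ => ?_
  simp [G.adj_comm]

lemma nbr_lower {X : Finset V} {v : V} (hv : v ∉ X) :
    G.degree v ≤ (G.neighborFinset v ∩ X).card + ((univ \ X).card - 1) := by
  have h1 := deg_partition G X v
  have h2 : G.neighborFinset v ∩ (univ \ X) ⊆ (univ \ X).erase v := by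
    intro x hx
    rcases Finset.mem_inter.1 hx with ⟨hx1, hx2⟩
    refine Finset.mem_erase.2 ⟨?_, hx2⟩
    rintro rfl
    exact (G.irrefl ((SimpleGraph.mem_neighborFinset _ _ _).1 hx1))
  have h3 := Finset.card_le_card h2
  have h4 : ((univ \ X).erase v).card = (univ \ X).card - 1 :=
    Finset.card_erase_of_mem (by simp [hv])
  omega

lemma all_adj {I : Finset V} {v : V}
    (h : (I.erase v).card ≤ (G.neighborFinset v ∩ I).card) :
    ∀ u ∈ I, u ≠ v → G.Adj v u := by
  have hsub : G.neighborFinset v ∩ I ⊆ I.erase v := by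
    intro x hx
    rcases Finset.mem_inter.1 hx with ⟨hx1, hx2⟩
    refine Finset.mem_erase.2 ⟨?_, hx2⟩
    rintro rfl
    exact (G.irrefl ((SimpleGraph.mem_neighborFinset _ _ _).1 hx1))
  have heq := Finset.eq_of_subset_of_card_le hsub h
  intro u hu huv
  have : u ∈ G.neighborFinset v ∩ I := by
    rw [heq]; exact Finset.mem_erase.2 ⟨huv, hu⟩
  exact (SimpleGraph.mem_neighborFinset _ _ _).1 (Finset.mem_inter.1 this).1

lemma fin_filter_lt_card (m : ℕ) :
    (univ.filter (fun j : Fin n => (j : ℕ) < m)).card ≤ m := by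
  have := Finset.card_le_card_of_injOn (s := univ.filter (fun j : Fin n => (j : ℕ) < m))
    (t := Finset.range m) (fun j : Fin n => (j : ℕ))
    (fun a ha => Finset.mem_range.2 (Finset.mem_filter.1 ha).2)
    (fun a _ b _ h => Fin.val_injective h)
  rwa [Finset.card_range] at this

lemma low_le' (e : Fin n ≃ V)
    (hmono : ∀ i j : Fin n, i ≤ j → G.degree (e i) ≤ G.degree (e j))
    (j : Fin n) (i D : ℕ) (hv : (j : ℕ) = i - 1) (h1 : 1 ≤ i)
    (hbig : i ≤ (univ.filter (fun v => G.degree v ≤ D)).card) :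
    G.degree (e j) ≤ D := by
  by_contra hD
  push_neg at hD
  set S := univ.filter (fun v => G.degree v ≤ D) with hS
  have hsub : S.image e.symm ⊆ univ.filter (fun j' : Fin n => (j' : ℕ) < i - 1) := by
    intro j' hj'
    rcases Finset.mem_image.1 hj' with ⟨v, hv', rfl⟩
    simp only [hS, Finset.mem_filter, Finset.mem_univ, true_and] at hv' ⊢
    by_contra hlt
    push_neg at hlt
    have hle : j ≤ e.symm v := by rw [Fin.le_def, hv]; exact hlt
    have := hmono j (e.symm v) hle
    rw [Equiv.apply_symm_apply] at this
    omega
  have h2 : S.card = (S.image e.symm).card := (Finset.card_image_of_injective _ e.symm.injective).symm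
  have h3 := Finset.card_le_card hsub
  have h4 := fin_filter_lt_card (n := n) (i - 1)
  omega

lemma high_count' (e : Fin n ≃ V)
    (hmono : ∀ i j : Fin n, i ≤ j → G.degree (e i) ≤ G.degree (e j))
    (j : Fin n) (k : ℕ) {D : ℕ} (hv : (j : ℕ) = k) (h : D ≤ G.degree (e j)) :
    n - k ≤ (univ.filter (fun v => D ≤ G.degree v)).card := by
  set T := univ.filter (fun j' : Fin n => k ≤ (j' : ℕ)) with hT
  have hTcard : n - k ≤ T.card := by
    have hsplit := Finset.card_filter_add_card_filter_not
      (s := (univ : Finset (Fin n))) (p := fun j' : Fin n => k ≤ (j' : ℕ))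
    rw [← hT] at hsplit
    have huniv : (univ : Finset (Fin n)).card = n := by simp
    rw [huniv] at hsplit
    have hneg : (univ.filter (fun j' : Fin n => ¬ k ≤ (j' : ℕ))).card ≤ k := by
      have : (univ.filter (fun j' : Fin n => ¬ k ≤ (j' : ℕ)))
          = (univ.filter (fun j' : Fin n => (j' : ℕ) < k)) := by
        refine Finset.filter_congr fun j' _ => ?_
        omega
      rw [this]
      exact fin_filter_lt_card k
    omega
  have hsub : T.image e ⊆ univ.filter (fun v => D ≤ G.degree v) := by
    intro v hv'
    rcases Finset.mem_image.1 hv' with ⟨j', hj', rfl⟩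
    simp only [hT, Finset.mem_filter, Finset.mem_univ, true_and] at hj' ⊢
    refine le_trans h (hmono j j' ?_)
    rw [Fin.le_def, hv]
    exact hj'
  have h2 : T.card = (T.image e).card := (Finset.card_image_of_injective _ e.injective).symm
  have h3 := Finset.card_le_card hsub
  omega

end Counting

set_option maxHeartbeats 4000000 in
theorem stmt13 {V : Type*} [Fintype V] (G : SimpleGraph V)
    (hconn : G.Connected)
    (n : ℕ) (hcard : Fintype.card V = n) (hn : 13 ≤ n)
    (e : Fin n ≃ V)
    (hmono : ∀ i j : Fin n, i ≤ j → G.degree (e i) ≤ G.degree (e j))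
    (hchv : ∀ i : ℕ, ∀ h1 : 1 ≤ i, ∀ h2 : 2 * i < n,
      i + 1 ≤ G.degree (e ⟨i - 1, by omega⟩) ∨
      n - i - 1 ≤ G.degree (e ⟨n - i - 1, by omega⟩))
    (hdeg1 : (Finset.univ.filter (fun v => G.degree v = 1)).card ≤ 1)
    (hm : 2 < minContagious G 2)
    (L : Finset V) (hL : L = Finset.univ.filter (fun v => n - 1 ≤ 2 * G.degree v))
    (I : Finset V)
    (hIcl : ∃ A : Finset V, A.card = 2 ∧ I = bootClosure G 2 A)
    (hIL : (I ∩ L).Nonempty)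
    (hImax : ∀ A : Finset V, A.card = 2 → (bootClosure G 2 A ∩ L).Nonempty →
      (bootClosure G 2 A).card ≤ I.card) :
    2 * I.card < n := by
  by_contra hfin
  push_neg at hfin
  obtain ⟨A, hA2, hIA⟩ := hIcl
  -- basic facts
  have no_perc : ∀ P : Finset V, P.card = 2 → bootClosure G 2 P ≠ univ := by
    intro P hP h
    have hperc : Percolates G 2 P := ⟨Fintype.card V, h⟩
    have : minContagious G 2 ≤ 2 := Nat.sInf_le ⟨P, hP, hperc⟩
    omega
  have hclosedI : ∀ v, v ∉ I → (G.neighborFinset v ∩ I).card ≤ 1 := by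
    intro v hv
    rw [hIA] at hv ⊢
    exact notmem_closure_card hv
  have hInu : I ≠ univ := by
    intro h
    exact no_perc A hA2 (by rw [← hIA, h])
  obtain ⟨B, hBdef⟩ : ∃ B : Finset V, B = univ \ I := ⟨_, rfl⟩
  have huniv : (univ : Finset V).card = n := by rw [Finset.card_univ, hcard]
  have hmemB : ∀ v, v ∈ B ↔ v ∉ I := by
    intro v; rw [hBdef]; simp
  have hIB : I.card + B.card = n := by
    have h1 := Finset.card_sdiff_add_card_eq_card (Finset.subset_univ I)
    rw [← hBdef] at h1
    omega
  have hb1 : 1 ≤ B.card := by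
    rcases Finset.eq_empty_or_nonempty B with h | h
    · exfalso
      apply hInu
      have : univ ⊆ I := by
        intro v _
        by_contra hv
        have : v ∈ B := (hmemB v).2 hv
        simp [h] at this
      exact Finset.univ_subset_iff.1 this
    · exact Finset.card_pos.2 h
  have h2b : 2 * B.card ≤ n := by omega
  have hIcardn : I.card = n - B.card := by omega
  have hpart : ∀ v, (G.neighborFinset v ∩ I).card + (G.neighborFinset v ∩ B).card = G.degree v := by
    intro v
    have := deg_partition G I v
    rwa [← hBdef] at this
  have hIneB : ∀ p, p ∈ I → ∀ q, q ∈ B → p ≠ q := by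
    intro p hp q hq h
    subst h
    exact ((hmemB p).1 hq) hp
  have hBdeg : ∀ w ∈ B, G.degree w ≤ B.card := by
    intro w hw
    have h1 := hpart w
    have h2 := hclosedI w ((hmemB w).1 hw)
    have h3 : G.neighborFinset w ∩ B ⊆ B.erase w := by
      intro x hx
      rcases Finset.mem_inter.1 hx with ⟨hx1, hx2⟩
      refine Finset.mem_erase.2 ⟨?_, hx2⟩
      rintro rfl
      exact (G.irrefl ((SimpleGraph.mem_neighborFinset _ _ _).1 hx1))
    have h4 := Finset.card_le_card h3
    have h5 : (B.erase w).card = B.card - 1 := Finset.card_erase_of_mem hw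
    omega
  have heIB : (∑ w ∈ B, (G.neighborFinset w ∩ I).card) ≤ B.card := by
    calc (∑ w ∈ B, (G.neighborFinset w ∩ I).card) ≤ ∑ _w ∈ B, 1 :=
          Finset.sum_le_sum (fun w hw => hclosedI w ((hmemB w).1 hw))
      _ = B.card := by simp
  have hLmem : ∀ v, n - 1 ≤ 2 * G.degree v → v ∈ L := by
    intro v hv
    rw [hL]
    simp only [Finset.mem_filter, Finset.mem_univ, true_and]
    exact hv
  have max_contra : ∀ P : Finset V, P.card = 2 → ∀ x, x ∈ bootClosure G 2 P → x ∈ L →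
      I.card < (bootClosure G 2 P).card → False := by
    intro P hP x hx hxL hlt
    have := hImax P hP ⟨x, Finset.mem_inter.2 ⟨hx, hxL⟩⟩
    omega
  have hdegpos : ∀ v : V, 0 < G.degree v := by
    intro v
    have h1 : 1 < Fintype.card V := by omega
    obtain ⟨u, hu⟩ := Fintype.exists_ne_of_one_lt_card h1 v
    obtain ⟨p⟩ := hconn.preconnected v u
    cases p with
    | nil => exact absurd rfl hu
    | cons h q =>
        rw [← SimpleGraph.card_neighborFinset_eq_degree]
        exact Finset.card_pos.2 ⟨_, (SimpleGraph.mem_neighborFinset _ _ _).2 h⟩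
  -- full vertices of B
  have hfullw : ∀ w ∈ B, G.degree w = B.card →
      ((G.neighborFinset w ∩ I).card = 1 ∧ ∀ z ∈ B, z ≠ w → G.Adj w z) := by
    intro w hw hdw
    have h1 := hpart w
    have h2 := hclosedI w ((hmemB w).1 hw)
    have h3 : G.neighborFinset w ∩ B ⊆ B.erase w := by
      intro x hx
      rcases Finset.mem_inter.1 hx with ⟨hx1, hx2⟩
      refine Finset.mem_erase.2 ⟨?_, hx2⟩
      rintro rfl
      exact (G.irrefl ((SimpleGraph.mem_neighborFinset _ _ _).1 hx1))
    have h4 := Finset.card_le_card h3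
    have h5 : (B.erase w).card = B.card - 1 := Finset.card_erase_of_mem hw
    constructor
    · omega
    · have heq : G.neighborFinset w ∩ B = B.erase w :=
        Finset.eq_of_subset_of_card_le h3 (by omega)
      intro z hz hzw
      have : z ∈ G.neighborFinset w ∩ B := by
        rw [heq]; exact Finset.mem_erase.2 ⟨hzw, hz⟩
      exact (SimpleGraph.mem_neighborFinset _ _ _).1 (Finset.mem_inter.1 this).1
  rcases Nat.lt_or_ge B.card 2 with hbsmall | hbge2
  · -- Case b = 1
    have hbeq : B.card = 1 := by omega
    obtain ⟨w, hwB⟩ := Finset.card_eq_one.1 hbeq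
    have hwmem : w ∈ B := by rw [hwB]; exact Finset.mem_singleton_self w
    have hwnI : w ∉ I := (hmemB w).1 hwmem
    have hIw : ∀ v, v ≠ w → v ∈ I := by
      intro v hv
      by_contra hvI
      have : v ∈ B := (hmemB v).2 hvI
      rw [hwB, Finset.mem_singleton] at this
      exact hv this
    have hdegw : G.degree w = 1 := by
      have := hBdeg w hwmem
      have := hdegpos w
      omega
    obtain ⟨x, hx⟩ : ∃ x, G.neighborFinset w = {x} := by
      apply Finset.card_eq_one.1
      rw [SimpleGraph.card_neighborFinset_eq_degree]
      exact hdegw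
    have hadjwx : G.Adj w x := by
      rw [← SimpleGraph.mem_neighborFinset, hx]
      exact Finset.mem_singleton_self x
    have hxw : x ≠ w := fun h => G.irrefl (h ▸ hadjwx)
    have hxI : x ∈ I := hIw x hxw
    have hadjw_iff : ∀ z, G.Adj w z → z = x := by
      intro z hz
      have : z ∈ G.neighborFinset w := (SimpleGraph.mem_neighborFinset _ _ _).2 hz
      rw [hx, Finset.mem_singleton] at this
      exact this
    -- Chvatal at i = 1
    rcases hchv 1 le_rfl (by omega) with h1 | h1
    · -- 2 ≤ degree of smallest: contradiction with deg w = 1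
      have hbig : 1 ≤ (univ.filter (fun v => G.degree v ≤ 1)).card := by
        refine Finset.card_pos.2 ⟨w, ?_⟩
        simp only [Finset.mem_filter, Finset.mem_univ, true_and]
        omega
      have := le_trans h1 (low_le' G e hmono _ 1 1 rfl le_rfl hbig)
      omega
    · -- at least two vertices of degree ≥ n - 2
      have hcnt := high_count' G e hmono _ (n - 1 - 1) rfl h1
      have hcnt2 : 2 ≤ (univ.filter (fun v => n - 1 - 1 ≤ G.degree v)).card := by omega
      obtain ⟨t, ht, t', ht', htt'⟩ := Finset.one_lt_card.1 (by omega : 1 < (univ.filter (fun v => n - 1 - 1 ≤ G.degree v)).card)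
      simp only [Finset.mem_filter, Finset.mem_univ, true_and] at ht ht'
      have htw : t ≠ w := by
        intro h; rw [h, hdegw] at ht; omega
      have ht'w : t' ≠ w := by
        intro h; rw [h, hdegw] at ht'; omega
      have htI : t ∈ I := hIw t htw
      have ht'I : t' ∈ I := hIw t' ht'w
      have hIcard1 : I.card = n - 1 := by omega
      -- all-I-adjacency for any such vertex not adjacent to w
      have hallI : ∀ s, s ∈ I → n - 1 - 1 ≤ G.degree s → s ≠ x → ∀ u ∈ I, u ≠ s → G.Adj s u := by
        intro s hsI hsdeg hsx
        apply all_adj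
        have hnb : (G.neighborFinset s ∩ B).card = 0 := by
          rw [Finset.card_eq_zero]
          rw [hwB]
          rw [Finset.eq_empty_iff_forall_notMem]
          intro z hz
          rcases Finset.mem_inter.1 hz with ⟨hz1, hz2⟩
          rw [Finset.mem_singleton] at hz2
          subst hz2
          have : s = x := hadjw_iff s ((SimpleGraph.mem_neighborFinset _ _ _).1 hz1).symm
          exact hsx this
        have hp := hpart s
        have he : (I.erase s).card = I.card - 1 := Finset.card_erase_of_mem hsI
        omega
      -- case analysis on whether x is among t, t'
      by_cases hxtt : x = t ∨ x = t'
      · -- x has high degree; let s be the other one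
        obtain ⟨s, hsdeg, hsx, hsI⟩ : ∃ s, (n - 1 - 1 ≤ G.degree s) ∧ s ≠ x ∧ s ∈ I := by
          rcases hxtt with h | h
          · exact ⟨t', ht', by rw [← h] at htt'; exact fun hc => htt' hc.symm, ht'I⟩
          · exact ⟨t, ht, by rw [← h] at htt'; exact fun hc => htt' hc, htI⟩
        have hxdeg : n - 1 - 1 ≤ G.degree x := by
          rcases hxtt with h | h
          · rw [h]; exact ht
          · rw [h]; exact ht'
        have hsall := hallI s hsI hsdeg hsx
        have hxmiss : ∀ u, u ∈ I → ∀ u', u' ∈ I → u ≠ u' → u ≠ x → u' ≠ x →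
            ¬ G.Adj x u → ¬ G.Adj x u' → False := by
          intro u hu u' hu' huu' hux hu'x hnu hnu'
          have hsub : G.neighborFinset x ⊆ ((univ.erase x).erase u).erase u' := by
            intro z hz
            have hadj : G.Adj x z := (SimpleGraph.mem_neighborFinset _ _ _).1 hz
            refine Finset.mem_erase.2 ⟨?_, Finset.mem_erase.2 ⟨?_, Finset.mem_erase.2 ⟨?_, Finset.mem_univ z⟩⟩⟩
            · rintro rfl; exact hnu' hadj
            · rintro rfl; exact hnu hadj
            · rintro rfl; exact G.irrefl hadj
          have hc1 := Finset.card_le_card hsub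
          have hc2 : (((univ.erase x).erase u).erase u').card = n - 3 := by
            rw [Finset.card_erase_of_mem, Finset.card_erase_of_mem, Finset.card_erase_of_mem]
            · omega
            · exact Finset.mem_univ x
            · exact Finset.mem_erase.2 ⟨hux, Finset.mem_univ u⟩
            · exact Finset.mem_erase.2 ⟨fun h => huu' h.symm, Finset.mem_erase.2 ⟨hu'x, Finset.mem_univ u'⟩⟩
          rw [SimpleGraph.card_neighborFinset_eq_degree] at hc1
          omega
        have hsw : s ≠ w := hIneB s hsI w hwmem
        have hsE : s ∈ bootClosure G 2 {s, w} := seed_mem₁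
        have hwE : w ∈ bootClosure G 2 {s, w} := seed_mem₂
        have hxE : x ∈ bootClosure G 2 {s, w} :=
          two_mem hsE hwE hsw ((hsall x hxI (fun h => hsx h.symm)).symm) hadjwx.symm
        by_cases hex : ∃ v₀, v₀ ∈ I ∧ v₀ ≠ x ∧ ¬ G.Adj x v₀
        · obtain ⟨v₀, hv₀I, hv₀x, hv₀na⟩ := hex
          have huniq : ∀ u, u ∈ I → u ≠ x → u ≠ v₀ → G.Adj x u := by
            intro u hu hux huv₀
            by_contra hna
            exact hxmiss u hu v₀ hv₀I huv₀ hux hv₀x hna hv₀na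
          have hIE : ∀ u, u ∈ I → u ≠ v₀ → u ∈ bootClosure G 2 {s, w} := by
            intro u hu huv₀
            by_cases hus : u = s
            · rw [hus]; exact hsE
            · by_cases hux : u = x
              · rw [hux]; exact hxE
              · exact two_mem hsE hxE (fun h => hsx h)
                  ((hsall u hu hus).symm) ((huniq u hu hux huv₀).symm)
          rcases Nat.lt_or_ge (G.degree v₀) 2 with hd | hd
          · -- v₀ has degree 1: contradiction with hdeg1
            have hv₀deg : G.degree v₀ = 1 := by
              have := hdegpos v₀
              omega
            have hsubd : ({v₀, w} : Finset V) ⊆ univ.filter (fun v => G.degree v = 1) := by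
              intro z hz
              rcases Finset.mem_insert.1 hz with h | h
              · subst h; simp [hv₀deg]
              · rw [Finset.mem_singleton] at h; subst h; simp [hdegw]
            have := Finset.card_le_card hsubd
            rw [Finset.card_pair (hIneB v₀ hv₀I w hwmem)] at this
            omega
          · -- v₀ has ≥ 2 neighbors, all in I \ {x, v₀}
            obtain ⟨u₁, hu₁, u₂, hu₂, hu₁₂⟩ := Finset.one_lt_card.1
              (by rw [SimpleGraph.card_neighborFinset_eq_degree]; omega :
                1 < (G.neighborFinset v₀).card)
            have hadj1 : G.Adj v₀ u₁ := (SimpleGraph.mem_neighborFinset _ _ _).1 hu₁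
            have hadj2 : G.Adj v₀ u₂ := (SimpleGraph.mem_neighborFinset _ _ _).1 hu₂
            have hmemE : ∀ u, G.Adj v₀ u → u ∈ bootClosure G 2 {s, w} := by
              intro u hadj
              have huw : u ≠ w := by
                intro h
                subst h
                have := hadjw_iff v₀ hadj.symm
                exact hv₀x this
              have hux : u ≠ x := by
                intro h
                subst h
                exact hv₀na hadj.symm
              have huv₀ : u ≠ v₀ := fun h => G.irrefl (h ▸ hadj).symm
              exact hIE u (hIw u huw) huv₀
            have hv₀E : v₀ ∈ bootClosure G 2 {s, w} :=
              two_mem (hmemE u₁ hadj1) (hmemE u₂ hadj2) hu₁₂ hadj1 hadj2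
            have hunivE : bootClosure G 2 {s, w} = univ := by
              apply Finset.univ_subset_iff.1
              intro z _
              by_cases hzw : z = w
              · rw [hzw]; exact hwE
              · by_cases hzv₀ : z = v₀
                · rw [hzv₀]; exact hv₀E
                · exact hIE z (hIw z hzw) hzv₀
            exact no_perc {s, w} (Finset.card_pair hsw) hunivE
        · push_neg at hex
          have hIE : ∀ u, u ∈ I → u ∈ bootClosure G 2 {s, w} := by
            intro u hu
            by_cases hus : u = s
            · rw [hus]; exact hsE
            · by_cases hux : u = x
              · rw [hux]; exact hxE
              · exact two_mem hsE hxE (fun h => hsx h)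
                  ((hsall u hu hus).symm) ((hex u hu hux).symm)
          have hunivE : bootClosure G 2 {s, w} = univ := by
            apply Finset.univ_subset_iff.1
            intro z _
            by_cases hzw : z = w
            · rw [hzw]; exact hwE
            · exact hIE z (hIw z hzw)
          exact no_perc {s, w} (Finset.card_pair hsw) hunivE
      · -- x is neither t nor t'; both t, t' adjacent to all of I
        push_neg at hxtt
        obtain ⟨hxt, hxt'⟩ := hxtt
        have htall := hallI t htI ht (fun h => hxt h.symm)
        have ht'all := hallI t' ht'I ht' (fun h => hxt' h.symm)
        have htw2 : t ≠ w := htw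
        have htE : t ∈ bootClosure G 2 {t, w} := seed_mem₁
        have hwE : w ∈ bootClosure G 2 {t, w} := seed_mem₂
        have hxE : x ∈ bootClosure G 2 {t, w} :=
          two_mem htE hwE htw ((htall x hxI hxt).symm) hadjwx.symm
        have ht'E : t' ∈ bootClosure G 2 {t, w} :=
          two_mem htE hxE (fun h => hxt h.symm)
            ((htall t' ht'I (fun h => htt' h.symm)).symm) (ht'all x hxI hxt')
        have hIE : ∀ u, u ∈ I → u ∈ bootClosure G 2 {t, w} := by
          intro u hu
          by_cases hut : u = t
          · rw [hut]; exact htE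
          · by_cases hut' : u = t'
            · rw [hut']; exact ht'E
            · exact two_mem htE ht'E htt'
                ((htall u hu hut).symm) ((ht'all u hu hut').symm)
        have hunivE : bootClosure G 2 {t, w} = univ := by
          apply Finset.univ_subset_iff.1
          intro z _
          by_cases hzw : z = w
          · rw [hzw]; exact hwE
          · exact hIE z (hIw z hzw)
        exact no_perc {t, w} (Finset.card_pair htw) hunivE
  · -- Case b ≥ 2
    rcases (show n = 2 * B.card ∨ 2 * B.card + 1 ≤ n by omega) with h2beq | hn1
    · -- Case n = 2b
      have hbig7 : 6 ≤ B.card := by omega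
      have hIcard : I.card = B.card := by omega
      have hκcontra : 2 ≤ (B.filter (fun w => G.degree w = B.card)).card → False := by
        intro hκ
        obtain ⟨w₁, hw₁, w₂, hw₂, hw12⟩ := Finset.one_lt_card.1 (by omega : 1 < (B.filter (fun w => G.degree w = B.card)).card)
        rw [Finset.mem_filter] at hw₁ hw₂
        obtain ⟨hw₁B, hw₁deg⟩ := hw₁
        obtain ⟨hw₂B, hw₂deg⟩ := hw₂
        obtain ⟨hw₁I, hw₁adj⟩ := hfullw w₁ hw₁B hw₁deg
        obtain ⟨_, hw₂adj⟩ := hfullw w₂ hw₂B hw₂deg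
        obtain ⟨x₁, hx₁⟩ := Finset.card_eq_one.1 hw₁I
        have hx₁mem : x₁ ∈ G.neighborFinset w₁ ∩ I := by
          rw [hx₁]; exact Finset.mem_singleton_self x₁
        have hx₁I : x₁ ∈ I := (Finset.mem_inter.1 hx₁mem).2
        have hadjw₁x₁ : G.Adj w₁ x₁ :=
          (SimpleGraph.mem_neighborFinset _ _ _).1 (Finset.mem_inter.1 hx₁mem).1
        have hx₁w₂ : x₁ ≠ w₂ := hIneB x₁ hx₁I w₂ hw₂B
        have hx₁E : x₁ ∈ bootClosure G 2 {x₁, w₂} := seed_mem₁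
        have hw₂E : w₂ ∈ bootClosure G 2 {x₁, w₂} := seed_mem₂
        have hw₁E : w₁ ∈ bootClosure G 2 {x₁, w₂} :=
          two_mem hx₁E hw₂E hx₁w₂ hadjw₁x₁ (hw₁adj w₂ hw₂B (Ne.symm hw12))
        have hBE : B ⊆ bootClosure G 2 {x₁, w₂} := by
          intro z hz
          by_cases hz1 : z = w₁
          · rw [hz1]; exact hw₁E
          · by_cases hz2 : z = w₂
            · rw [hz2]; exact hw₂E
            · exact two_mem hw₁E hw₂E hw12 ((hw₁adj z hz hz1).symm) ((hw₂adj z hz hz2).symm)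
        have hsubE : B ∪ {x₁} ⊆ bootClosure G 2 {x₁, w₂} := by
          intro z hz
          rcases Finset.mem_union.1 hz with h | h
          · exact hBE h
          · rw [Finset.mem_singleton] at h; rw [h]; exact hx₁E
        have hcardE : B.card + 1 ≤ (bootClosure G 2 {x₁, w₂}).card := by
          have h1 := Finset.card_le_card hsubE
          have h2 : (B ∪ {x₁}).card = B.card + 1 := by
            rw [Finset.card_union_of_disjoint
              (Finset.disjoint_singleton_right.2 (fun h => (hmemB x₁).1 h hx₁I))]
            simp
          omega
        have hw₁L : w₁ ∈ L := hLmem w₁ (by omega)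
        exact max_contra {x₁, w₂} (Finset.card_pair hx₁w₂) w₁ hw₁E hw₁L (by omega)
      rcases hchv (B.card - 1) (by omega) (by omega) with hα | hβ
      · -- few low-degree vertices ⇒ two full vertices of B
        have hlow : (univ.filter (fun v => G.degree v ≤ B.card - 1)).card ≤ B.card - 2 := by
          by_contra hcon
          push_neg at hcon
          have := le_trans hα
            (low_le' G e hmono _ (B.card - 1) (B.card - 1) rfl (by omega) (by omega))
          omega
        apply hκcontra
        have hsub : B \ B.filter (fun w => G.degree w = B.card) ⊆
            univ.filter (fun v => G.degree v ≤ B.card - 1) := by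
          intro z hz
          rcases Finset.mem_sdiff.1 hz with ⟨hzB, hzn⟩
          have hne : G.degree z ≠ B.card := fun h => hzn (Finset.mem_filter.2 ⟨hzB, h⟩)
          have := hBdeg z hzB
          simp only [Finset.mem_filter, Finset.mem_univ, true_and]
          omega
        have h1 := Finset.card_le_card hsub
        have h2 : (B \ B.filter (fun w => G.degree w = B.card)).card
            = B.card - (B.filter (fun w => G.degree w = B.card)).card :=
          Finset.card_sdiff_of_subset (Finset.filter_subset _ _)
        have h3 := Finset.card_le_card (Finset.filter_subset (fun w => G.degree w = B.card) B)
        omega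
      · -- many vertices of degree ≥ b
        have hcnt := high_count' G e hmono _ (n - (B.card - 1) - 1) rfl hβ
        by_cases hκ : 2 ≤ (B.filter (fun w => G.degree w = B.card)).card
        · exact hκcontra hκ
        · push_neg at hκ
          obtain ⟨S, hSdef⟩ : ∃ S, S = I.filter (fun v => B.card ≤ G.degree v) := ⟨_, rfl⟩
          have hSmem : ∀ v, v ∈ S ↔ v ∈ I ∧ B.card ≤ G.degree v := by
            intro v; rw [hSdef, Finset.mem_filter]
          have hSsub : univ.filter (fun v => n - (B.card - 1) - 1 ≤ G.degree v) ⊆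
              S ∪ B.filter (fun w => G.degree w = B.card) := by
            intro z hz
            simp only [Finset.mem_filter, Finset.mem_univ, true_and] at hz
            have hz' : B.card ≤ G.degree z := by omega
            by_cases hzI : z ∈ I
            · exact Finset.mem_union_left _ ((hSmem z).2 ⟨hzI, hz'⟩)
            · have hzB : z ∈ B := (hmemB z).2 hzI
              have := hBdeg z hzB
              exact Finset.mem_union_right _ (Finset.mem_filter.2 ⟨hzB, by omega⟩)
          have hScard : B.card - 1 ≤ S.card := by
            have h1 := Finset.card_le_card hSsub
            have h2 := Finset.card_union_le S (B.filter (fun w => G.degree w = B.card))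
            omega
          have hub : univ \ B = I := by
            rw [hBdef, Finset.sdiff_sdiff_self_left, Finset.univ_inter]
          have hS1 : ∀ v ∈ S, 1 ≤ (G.neighborFinset v ∩ B).card := by
            intro v hv
            obtain ⟨hvI, hvdeg⟩ := (hSmem v).1 hv
            have h1 := nbr_lower G (X := B) (v := v) (fun h => (hmemB v).1 h hvI)
            rw [hub] at h1
            omega
          have hSsum : (∑ v ∈ S, (G.neighborFinset v ∩ B).card) ≤ B.card := by
            calc (∑ v ∈ S, (G.neighborFinset v ∩ B).card)
                ≤ ∑ v ∈ I, (G.neighborFinset v ∩ B).card := by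
                  refine Finset.sum_le_sum_of_subset ?_
                  rw [hSdef]; exact Finset.filter_subset _ _
              _ = ∑ w ∈ B, (G.neighborFinset w ∩ I).card := sum_inter_comm G I B
              _ ≤ B.card := heIB
          obtain ⟨S1, hS1def⟩ : ∃ S1, S1 = S.filter (fun v => (G.neighborFinset v ∩ B).card = 1) :=
            ⟨_, rfl⟩
          have hS1card : 2 ≤ S1.card := by
            have hsplit := Finset.sum_filter_add_sum_filter_not S
              (fun v => (G.neighborFinset v ∩ B).card = 1) (fun v => (G.neighborFinset v ∩ B).card)
            have e1 : (∑ v ∈ S.filter (fun v => (G.neighborFinset v ∩ B).card = 1),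
                (G.neighborFinset v ∩ B).card) = S1.card := by
              rw [← hS1def]
              have hmem1 : ∀ v ∈ S1, (G.neighborFinset v ∩ B).card = 1 := by
                intro v hv
                rw [hS1def] at hv
                exact (Finset.mem_filter.1 hv).2
              rw [Finset.sum_congr rfl hmem1]
              simp
            have hcardsplit := Finset.card_filter_add_card_filter_not (s := S)
              (p := fun v => (G.neighborFinset v ∩ B).card = 1)
            rw [← hS1def] at hcardsplit
            have e2 : 2 * (S.card - S1.card) ≤
                ∑ v ∈ S.filter (fun v => ¬ (G.neighborFinset v ∩ B).card = 1),
                  (G.neighborFinset v ∩ B).card := by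
              have hterm : ∀ v ∈ S.filter (fun v => ¬ (G.neighborFinset v ∩ B).card = 1),
                  2 ≤ (G.neighborFinset v ∩ B).card := by
                intro v hv
                rcases Finset.mem_filter.1 hv with ⟨hvS, hvn⟩
                have := hS1 v hvS
                omega
              have := Finset.card_nsmul_le_sum
                (S.filter (fun v => ¬ (G.neighborFinset v ∩ B).card = 1)) _ 2 hterm
              rw [smul_eq_mul] at this
              calc 2 * (S.card - S1.card)
                  = (S.filter (fun v => ¬ (G.neighborFinset v ∩ B).card = 1)).card * 2 := by
                    omega
                _ ≤ _ := this
            omega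
          obtain ⟨v₁, hv₁, v₂, hv₂, hv12⟩ := Finset.one_lt_card.1 (by omega : 1 < S1.card)
          have hS1prop : ∀ v ∈ S1, v ∈ I ∧ B.card ≤ G.degree v ∧ (G.neighborFinset v ∩ B).card = 1 := by
            intro v hv
            rw [hS1def, Finset.mem_filter] at hv
            exact ⟨((hSmem v).1 hv.1).1, ((hSmem v).1 hv.1).2, hv.2⟩
          obtain ⟨hv₁I, hv₁deg, hv₁B⟩ := hS1prop v₁ hv₁
          obtain ⟨hv₂I, hv₂deg, hv₂B⟩ := hS1prop v₂ hv₂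
          have hallIadj : ∀ v, v ∈ I → B.card ≤ G.degree v → (G.neighborFinset v ∩ B).card = 1 →
              ∀ u ∈ I, u ≠ v → G.Adj v u := by
            intro v hvI hvdeg hvB
            apply all_adj
            have hp := hpart v
            have he : (I.erase v).card = I.card - 1 := Finset.card_erase_of_mem hvI
            omega
          have hv₁all := hallIadj v₁ hv₁I hv₁deg hv₁B
          have hv₂all := hallIadj v₂ hv₂I hv₂deg hv₂B
          obtain ⟨f₂, hf₂⟩ := Finset.card_eq_one.1 hv₂B
          have hf₂mem : f₂ ∈ G.neighborFinset v₂ ∩ B := by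
            rw [hf₂]; exact Finset.mem_singleton_self f₂
          have hf₂B : f₂ ∈ B := (Finset.mem_inter.1 hf₂mem).2
          have hadjv₂f₂ : G.Adj v₂ f₂ :=
            (SimpleGraph.mem_neighborFinset _ _ _).1 (Finset.mem_inter.1 hf₂mem).1
          have hv₁f₂ : v₁ ≠ f₂ := hIneB v₁ hv₁I f₂ hf₂B
          have hv₁E : v₁ ∈ bootClosure G 2 {v₁, f₂} := seed_mem₁
          have hf₂E : f₂ ∈ bootClosure G 2 {v₁, f₂} := seed_mem₂
          have hv₂E : v₂ ∈ bootClosure G 2 {v₁, f₂} :=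
            two_mem hv₁E hf₂E hv₁f₂ ((hv₁all v₂ hv₂I (fun h => hv12 h.symm)).symm) hadjv₂f₂
          have hIE : ∀ u, u ∈ I → u ∈ bootClosure G 2 {v₁, f₂} := by
            intro u hu
            by_cases h1 : u = v₁
            · rw [h1]; exact hv₁E
            · by_cases h2 : u = v₂
              · rw [h2]; exact hv₂E
              · exact two_mem hv₁E hv₂E hv12 ((hv₁all u hu h1).symm) ((hv₂all u hu h2).symm)
          have hsubE : I ∪ {f₂} ⊆ bootClosure G 2 {v₁, f₂} := by
            intro z hz
            rcases Finset.mem_union.1 hz with h | h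
            · exact hIE z h
            · rw [Finset.mem_singleton] at h; rw [h]; exact hf₂E
          have hcardE : I.card + 1 ≤ (bootClosure G 2 {v₁, f₂}).card := by
            have h1 := Finset.card_le_card hsubE
            have h2 : (I ∪ {f₂}).card = I.card + 1 := by
              rw [Finset.card_union_of_disjoint
                (Finset.disjoint_singleton_right.2 (fun h => (hmemB f₂).1 hf₂B h))]
              simp
            omega
          have hv₁L : v₁ ∈ L := hLmem v₁ (by omega)
          exact max_contra {v₁, f₂} (Finset.card_pair hv₁f₂) v₁ hv₁E hv₁L (by omega)

    · -- Main case: 2b + 1 ≤ n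
      rcases hchv (B.card - 1) (by omega) (by omega) with hα | hβ
      · -- α : d_{b-1} ≥ b
        have hlow : (univ.filter (fun v => G.degree v ≤ B.card - 1)).card ≤ B.card - 2 := by
          by_contra hcon
          push_neg at hcon
          have := le_trans hα
            (low_le' G e hmono _ (B.card - 1) (B.card - 1) rfl (by omega) (by omega))
          omega
        have hκ2 : 2 ≤ (B.filter (fun w => G.degree w = B.card)).card := by
          have hsub : B \ B.filter (fun w => G.degree w = B.card) ⊆
              univ.filter (fun v => G.degree v ≤ B.card - 1) := by
            intro z hz
            rcases Finset.mem_sdiff.1 hz with ⟨hzB, hzn⟩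
            have hne : G.degree z ≠ B.card := fun h => hzn (Finset.mem_filter.2 ⟨hzB, h⟩)
            have := hBdeg z hzB
            simp only [Finset.mem_filter, Finset.mem_univ, true_and]
            omega
          have h1 := Finset.card_le_card hsub
          have h2 : (B \ B.filter (fun w => G.degree w = B.card)).card
              = B.card - (B.filter (fun w => G.degree w = B.card)).card :=
            Finset.card_sdiff_of_subset (Finset.filter_subset _ _)
          have h3 := Finset.card_le_card (Finset.filter_subset (fun w => G.degree w = B.card) B)
          omega
        obtain ⟨w₁, hw₁m, w₂, hw₂m, hw12⟩ := Finset.one_lt_card.1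
          (by omega : 1 < (B.filter (fun w => G.degree w = B.card)).card)
        rw [Finset.mem_filter] at hw₁m hw₂m
        obtain ⟨hw₁B, hw₁deg⟩ := hw₁m
        obtain ⟨hw₂B, hw₂deg⟩ := hw₂m
        obtain ⟨hw₁I1, hw₁adj⟩ := hfullw w₁ hw₁B hw₁deg
        obtain ⟨hw₂I1, hw₂adj⟩ := hfullw w₂ hw₂B hw₂deg
        obtain ⟨x₁, hx₁⟩ := Finset.card_eq_one.1 hw₁I1
        obtain ⟨x₂, hx₂⟩ := Finset.card_eq_one.1 hw₂I1
        have hx₁mem : x₁ ∈ G.neighborFinset w₁ ∩ I := by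
          rw [hx₁]; exact Finset.mem_singleton_self x₁
        have hx₂mem : x₂ ∈ G.neighborFinset w₂ ∩ I := by
          rw [hx₂]; exact Finset.mem_singleton_self x₂
        have hx₁I : x₁ ∈ I := (Finset.mem_inter.1 hx₁mem).2
        have hx₂I : x₂ ∈ I := (Finset.mem_inter.1 hx₂mem).2
        have hadjw₁x₁ : G.Adj w₁ x₁ :=
          (SimpleGraph.mem_neighborFinset _ _ _).1 (Finset.mem_inter.1 hx₁mem).1
        have hadjw₂x₂ : G.Adj w₂ x₂ :=
          (SimpleGraph.mem_neighborFinset _ _ _).1 (Finset.mem_inter.1 hx₂mem).1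
        have hBspread : ∀ P : Finset V, w₁ ∈ bootClosure G 2 P → w₂ ∈ bootClosure G 2 P →
            B ⊆ bootClosure G 2 P := by
          intro P h1 h2 z hz
          by_cases hz1 : z = w₁
          · rw [hz1]; exact h1
          · by_cases hz2 : z = w₂
            · rw [hz2]; exact h2
            · exact two_mem h1 h2 hw12 ((hw₁adj z hz hz1).symm) ((hw₂adj z hz hz2).symm)
        obtain ⟨T, hTdef⟩ : ∃ T, T = I.filter (fun v => n - B.card - 1 ≤ G.degree v) := ⟨_, rfl⟩
        have hTmem : ∀ v, v ∈ T ↔ v ∈ I ∧ n - B.card - 1 ≤ G.degree v := by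
          intro v; rw [hTdef, Finset.mem_filter]
        have hTbigH : 2 * B.card + 2 ≤ n → B.card + 1 ≤ T.card := by
          intro hc
          rcases hchv B.card (by omega) (by omega) with h | h
          · have hbig : B.card ≤ (univ.filter (fun v => G.degree v ≤ B.card)).card := by
              refine le_trans le_rfl (le_trans ?_ (Finset.card_le_card
                (show B ⊆ univ.filter (fun v => G.degree v ≤ B.card) from ?_)))
              · exact le_rfl
              · intro z hz
                simp only [Finset.mem_filter, Finset.mem_univ, true_and]
                exact hBdeg z hz
            have := le_trans h (low_le' G e hmono _ B.card B.card rfl (by omega) hbig)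
            omega
          · have hcnt := high_count' G e hmono _ (n - B.card - 1) rfl h
            have hsub : univ.filter (fun v => n - B.card - 1 ≤ G.degree v) ⊆ T := by
              intro z hz
              simp only [Finset.mem_filter, Finset.mem_univ, true_and] at hz
              refine (hTmem z).2 ⟨?_, hz⟩
              by_contra hzI
              have hzB : z ∈ B := (hmemB z).2 hzI
              have := hBdeg z hzB
              omega
            have := Finset.card_le_card hsub
            omega
        have hT3 : 3 ≤ T.card := by
          rcases (show n = 2 * B.card + 1 ∨ 2 * B.card + 2 ≤ n by omega) with hc | hc
          · have hsub : (I \ T) ∪ (B \ B.filter (fun w => G.degree w = B.card)) ⊆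
                univ.filter (fun v => G.degree v ≤ B.card - 1) := by
              intro z hz
              simp only [Finset.mem_filter, Finset.mem_univ, true_and]
              rcases Finset.mem_union.1 hz with h | h
              · rcases Finset.mem_sdiff.1 h with ⟨hzI, hzT⟩
                have : ¬ (n - B.card - 1 ≤ G.degree z) := fun hh => hzT ((hTmem z).2 ⟨hzI, hh⟩)
                omega
              · rcases Finset.mem_sdiff.1 h with ⟨hzB, hzn⟩
                have hne : G.degree z ≠ B.card := fun h => hzn (Finset.mem_filter.2 ⟨hzB, h⟩)
                have := hBdeg z hzB
                omega
            have hdisj : Disjoint (I \ T) (B \ B.filter (fun w => G.degree w = B.card)) := by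
              rw [Finset.disjoint_left]
              intro a ha hb
              exact (hmemB a).1 (Finset.mem_sdiff.1 hb).1 (Finset.mem_sdiff.1 ha).1
            have h1 := Finset.card_le_card hsub
            rw [Finset.card_union_of_disjoint hdisj] at h1
            have h2 : (I \ T).card = I.card - T.card := by
              apply Finset.card_sdiff_of_subset
              rw [hTdef]; exact Finset.filter_subset _ _
            have h3 : (B \ B.filter (fun w => G.degree w = B.card)).card
                = B.card - (B.filter (fun w => G.degree w = B.card)).card :=
              Finset.card_sdiff_of_subset (Finset.filter_subset _ _)
            have h4 := Finset.card_le_card (Finset.filter_subset (fun w => G.degree w = B.card) B)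
            have h5 : T.card ≤ I.card := by
              rw [hTdef]; exact Finset.card_le_card (Finset.filter_subset _ _)
            omega
          · have := hTbigH hc
            omega
        have hTI : T ⊆ I := by rw [hTdef]; exact Finset.filter_subset _ _
        have hTdeg : ∀ v ∈ T, n - B.card - 1 ≤ G.degree v := fun v hv => ((hTmem v).1 hv).2
        have hstar : ∀ P : Finset V, P.card = 2 → B ⊆ bootClosure G 2 P →
            ∀ u v : V, u ∈ bootClosure G 2 P → v ∈ bootClosure G 2 P → u ∈ I → v ∈ I →
            u ≠ v → False := by
          intro P hP hBE u v huE hvE huI hvI huv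
          have hEcard : B.card + 2 ≤ (bootClosure G 2 P).card := by
            have hsubE : B ∪ {u, v} ⊆ bootClosure G 2 P := by
              intro z hz
              rcases Finset.mem_union.1 hz with h | h
              · exact hBE h
              · rcases Finset.mem_insert.1 h with h | h
                · rw [h]; exact huE
                · rw [Finset.mem_singleton] at h; rw [h]; exact hvE
            have h1 := Finset.card_le_card hsubE
            have h2 : (B ∪ {u, v}).card = B.card + 2 := by
              rw [Finset.card_union_of_disjoint]
              · rw [Finset.card_pair huv]
              · rw [Finset.disjoint_left]
                intro a haB ha2
                rcases Finset.mem_insert.1 ha2 with h | h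
                · exact (hmemB a).1 haB (h ▸ huI)
                · rw [Finset.mem_singleton] at h
                  exact (hmemB a).1 haB (h ▸ hvI)
            omega
          rcases (show n = 2 * B.card + 1 ∨ 2 * B.card + 2 ≤ n by omega) with hc | hc
          · have hw₁L : w₁ ∈ L := hLmem w₁ (by omega)
            exact max_contra P hP w₁ (hBE hw₁B) hw₁L (by omega)
          · have hTE : T ⊆ bootClosure G 2 P := by
              intro t ht
              by_contra htE
              have h1 := notmem_closure_card htE
              have h2 := nbr_lower G (X := bootClosure G 2 P) htE
              have h3 : (univ \ bootClosure G 2 P).card + (bootClosure G 2 P).card = n := by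
                have := Finset.card_sdiff_add_card_eq_card
                  (Finset.subset_univ (bootClosure G 2 P))
                omega
              have h4 := hTdeg t ht
              omega
            rcases Finset.eq_empty_or_nonempty (univ \ bootClosure G 2 P) with hME | hME
            · refine no_perc P hP ?_
              apply Finset.univ_subset_iff.1
              intro z _
              by_contra hz
              have : z ∈ univ \ bootClosure G 2 P := Finset.mem_sdiff.2 ⟨Finset.mem_univ z, hz⟩
              rw [hME] at this
              exact absurd this (Finset.notMem_empty z)
            · obtain ⟨M, hMdef⟩ : ∃ M, M = univ \ bootClosure G 2 P := ⟨_, rfl⟩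
              have hMne : M.Nonempty := hMdef ▸ hME
              have hMnotE : ∀ m ∈ M, m ∉ bootClosure G 2 P := by
                intro m hm
                rw [hMdef] at hm
                exact (Finset.mem_sdiff.1 hm).2
              have hMcard : M.card + (bootClosure G 2 P).card = n := by
                rw [hMdef]
                have := Finset.card_sdiff_add_card_eq_card
                  (Finset.subset_univ (bootClosure G 2 P))
                omega
              have hMBdisj : Disjoint M B := by
                rw [Finset.disjoint_left]
                intro a haM haB
                exact hMnotE a haM (hBE haB)
              have perT : ∀ t ∈ T, M.card ≤
                  (G.neighborFinset t ∩ M).card + (G.neighborFinset t ∩ B).card := by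
                intro t ht
                have htMB : t ∉ M ∪ B := by
                  rw [Finset.mem_union]
                  rintro (h | h)
                  · exact hMnotE t h (hTE ht)
                  · exact (hmemB t).1 h (hTI ht)
                have h1 := nbr_lower G (X := M ∪ B) htMB
                have h2 : (G.neighborFinset t ∩ (M ∪ B)).card
                    = (G.neighborFinset t ∩ M).card + (G.neighborFinset t ∩ B).card := by
                  rw [Finset.inter_union_distrib_left]
                  exact Finset.card_union_of_disjoint
                    (Finset.disjoint_of_subset_left Finset.inter_subset_right
                      (Finset.disjoint_of_subset_right Finset.inter_subset_right hMBdisj))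
                have h4 : (M ∪ B).card = M.card + B.card := Finset.card_union_of_disjoint hMBdisj
                have h3 : (univ \ (M ∪ B)).card + (M ∪ B).card = n := by
                  have := Finset.card_sdiff_add_card_eq_card (Finset.subset_univ (M ∪ B))
                  omega
                have h5 := hTdeg t ht
                omega
              have sum1 : (∑ t ∈ T, (G.neighborFinset t ∩ M).card) ≤ M.card := by
                rw [sum_inter_comm G T M]
                calc (∑ m ∈ M, (G.neighborFinset m ∩ T).card)
                    ≤ ∑ m ∈ M, 1 := by
                      refine Finset.sum_le_sum (fun m hm => ?_)
                      refine le_trans (Finset.card_le_card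
                        (Finset.inter_subset_inter (le_refl _) hTE)) ?_
                      exact notmem_closure_card (hMnotE m hm)
                  _ = M.card := by simp
              have sum2 : (∑ t ∈ T, (G.neighborFinset t ∩ B).card) ≤ B.card := by
                calc (∑ t ∈ T, (G.neighborFinset t ∩ B).card)
                    ≤ ∑ v ∈ I, (G.neighborFinset v ∩ B).card :=
                      Finset.sum_le_sum_of_subset hTI
                  _ = ∑ w ∈ B, (G.neighborFinset w ∩ I).card := sum_inter_comm G I B
                  _ ≤ B.card := heIB
              have sumlow : T.card * M.card ≤
                  ∑ t ∈ T, ((G.neighborFinset t ∩ M).card + (G.neighborFinset t ∩ B).card) := by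
                have := Finset.card_nsmul_le_sum T _ M.card perT
                simpa [smul_eq_mul] using this
              have hsum_split : (∑ t ∈ T, ((G.neighborFinset t ∩ M).card
                    + (G.neighborFinset t ∩ B).card))
                  = (∑ t ∈ T, (G.neighborFinset t ∩ M).card)
                    + ∑ t ∈ T, (G.neighborFinset t ∩ B).card := Finset.sum_add_distrib
              have hM1 : M.card ≤ 1 := by
                by_contra hc2
                push_neg at hc2
                have hTc := hTbigH hc
                have hmul : (B.card + 1) * M.card ≤ T.card * M.card :=
                  Nat.mul_le_mul_right _ hTc
                have hexp : (B.card + 1) * M.card = B.card * M.card + M.card := by ring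
                have hbm : B.card * 2 ≤ B.card * M.card := Nat.mul_le_mul_left _ hc2
                omega
              obtain ⟨t₀, ht₀⟩ := Finset.card_pos.1 (by omega : 0 < T.card)
              have ht₀L : t₀ ∈ L := hLmem t₀ (by have := hTdeg t₀ ht₀; omega)
              exact max_contra P hP t₀ (hTE ht₀) ht₀L (by omega)
        have hbridge : ∀ y, y ∈ I → ∀ f, f ∈ G.neighborFinset y ∩ B →
            ∃ P : Finset V, P.card = 2 ∧ y ∈ bootClosure G 2 P ∧ B ⊆ bootClosure G 2 P := by
          intro y hyI f hf
          rcases Finset.mem_inter.1 hf with ⟨hfN, hfB⟩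
          have hadjyf : G.Adj y f := (SimpleGraph.mem_neighborFinset _ _ _).1 hfN
          by_cases hfw : f = w₁
          · refine ⟨{y, w₂}, Finset.card_pair (hIneB y hyI w₂ hw₂B), seed_mem₁, ?_⟩
            have hyE : y ∈ bootClosure G 2 {y, w₂} := seed_mem₁
            have hw₂E : w₂ ∈ bootClosure G 2 {y, w₂} := seed_mem₂
            have hw₁E : w₁ ∈ bootClosure G 2 {y, w₂} :=
              two_mem hyE hw₂E (hIneB y hyI w₂ hw₂B) (hfw ▸ hadjyf).symm
                (hw₁adj w₂ hw₂B (Ne.symm hw12))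
            exact hBspread _ hw₁E hw₂E
          · refine ⟨{y, w₁}, Finset.card_pair (hIneB y hyI w₁ hw₁B), seed_mem₁, ?_⟩
            have hyE : y ∈ bootClosure G 2 {y, w₁} := seed_mem₁
            have hw₁E : w₁ ∈ bootClosure G 2 {y, w₁} := seed_mem₂
            have hfE : f ∈ bootClosure G 2 {y, w₁} :=
              two_mem hyE hw₁E (hIneB y hyI w₁ hw₁B) hadjyf.symm ((hw₁adj f hfB hfw).symm)
            have hw₂E : w₂ ∈ bootClosure G 2 {y, w₁} := by
              by_cases hw₂f : w₂ = f
              · rw [hw₂f]; exact hfE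
              · exact two_mem hw₁E hfE (fun h => hfw h.symm)
                  (hw₂adj w₁ hw₁B hw12) (hw₂adj f hfB (fun h => hw₂f h.symm))
            exact hBspread _ hw₁E hw₂E
        by_cases hmulti : ∃ v ∈ I, 2 ≤ (G.neighborFinset v ∩ B).card
        · obtain ⟨v, hvI, hv2⟩ := hmulti
          obtain ⟨p, hp, q, hq, hpq⟩ := Finset.one_lt_card.1
            (by omega : 1 < (G.neighborFinset v ∩ B).card)
          have hpB : p ∈ B := (Finset.mem_inter.1 hp).2
          have hqB : q ∈ B := (Finset.mem_inter.1 hq).2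
          have hadjvp : G.Adj v p :=
            (SimpleGraph.mem_neighborFinset _ _ _).1 (Finset.mem_inter.1 hp).1
          have hadjvq : G.Adj v q :=
            (SimpleGraph.mem_neighborFinset _ _ _).1 (Finset.mem_inter.1 hq).1
          by_cases hother : ∃ y ∈ I, y ≠ v ∧ (G.neighborFinset y ∩ B).Nonempty
          · obtain ⟨y, hyI, hyv, f, hf⟩ := hother
            obtain ⟨P, hP, hyE, hBE⟩ := hbridge y hyI f hf
            have hvE : v ∈ bootClosure G 2 P :=
              two_mem (hBE hpB) (hBE hqB) hpq hadjvp hadjvq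
            exact hstar P hP hBE y v hyE hvE hyI hvI hyv
          · push_neg at hother
            have hnofoot : ∀ y, y ∈ I → y ≠ v → G.neighborFinset y ∩ B = ∅ := by
              intro y hyI hyv
              exact hother y hyI hyv
            have hx₁v : x₁ = v := by
              by_contra h
              have hz := hnofoot x₁ hx₁I h
              have hmem : w₁ ∈ G.neighborFinset x₁ ∩ B :=
                Finset.mem_inter.2
                  ⟨(SimpleGraph.mem_neighborFinset _ _ _).2 hadjw₁x₁.symm, hw₁B⟩
              rw [hz] at hmem
              exact absurd hmem (Finset.notMem_empty w₁)
            have hx₂v : x₂ = v := by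
              by_contra h
              have hz := hnofoot x₂ hx₂I h
              have hmem : w₂ ∈ G.neighborFinset x₂ ∩ B :=
                Finset.mem_inter.2
                  ⟨(SimpleGraph.mem_neighborFinset _ _ _).2 hadjw₂x₂.symm, hw₂B⟩
              rw [hz] at hmem
              exact absurd hmem (Finset.notMem_empty w₂)
            obtain ⟨a, ha, c, hc, hac⟩ := Finset.one_lt_card.1 (by omega : 1 < T.card)
            obtain ⟨t₀, ht₀T, ht₀v⟩ : ∃ t₀, t₀ ∈ T ∧ t₀ ≠ v := by
              by_cases hav : a = v
              · exact ⟨c, hc, by rw [← hav]; exact fun h => hac h.symm⟩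
              · exact ⟨a, ha, hav⟩
            have ht₀I := hTI ht₀T
            have ht₀all : ∀ u ∈ I, u ≠ t₀ → G.Adj t₀ u := by
              apply all_adj
              have hz := hnofoot t₀ ht₀I ht₀v
              have hzc : (G.neighborFinset t₀ ∩ B).card = 0 := by rw [hz]; simp
              have hp' := hpart t₀
              have he : (I.erase t₀).card = I.card - 1 := Finset.card_erase_of_mem ht₀I
              have hd := hTdeg t₀ ht₀T
              omega
            have ht₀w₁ : t₀ ≠ w₁ := hIneB t₀ ht₀I w₁ hw₁B
            have ht₀E : t₀ ∈ bootClosure G 2 {t₀, w₁} := seed_mem₁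
            have hw₁E : w₁ ∈ bootClosure G 2 {t₀, w₁} := seed_mem₂
            have hvE : v ∈ bootClosure G 2 {t₀, w₁} :=
              two_mem ht₀E hw₁E ht₀w₁ ((ht₀all v hvI (Ne.symm ht₀v)).symm)
                (hx₁v ▸ hadjw₁x₁).symm
            have hw₂E : w₂ ∈ bootClosure G 2 {t₀, w₁} :=
              two_mem hw₁E hvE (Ne.symm (hIneB v hvI w₁ hw₁B))
                (hw₂adj w₁ hw₁B hw12) (hx₂v ▸ hadjw₂x₂)
            have hBE := hBspread _ hw₁E hw₂E
            exact hstar {t₀, w₁} (Finset.card_pair ht₀w₁) hBE t₀ v ht₀E hvE ht₀I hvI ht₀v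
        · push_neg at hmulti
          have hx12 : x₁ ≠ x₂ := by
            intro h
            have hsub : ({w₁, w₂} : Finset V) ⊆ G.neighborFinset x₁ ∩ B := by
              intro z hz
              rcases Finset.mem_insert.1 hz with hzz | hzz
              · subst hzz
                exact Finset.mem_inter.2
                  ⟨(SimpleGraph.mem_neighborFinset _ _ _).2 hadjw₁x₁.symm, hw₁B⟩
              · rw [Finset.mem_singleton] at hzz; subst hzz
                refine Finset.mem_inter.2 ⟨(SimpleGraph.mem_neighborFinset _ _ _).2 ?_, hw₂B⟩
                rw [h]; exact hadjw₂x₂.symm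
            have hc := Finset.card_le_card hsub
            rw [Finset.card_pair hw12] at hc
            have := hmulti x₁ hx₁I
            omega
          by_cases hadjbr : ∃ y ∈ I, ∃ y' ∈ I, y ≠ y' ∧ (G.neighborFinset y ∩ B).Nonempty ∧
              (G.neighborFinset y' ∩ B).Nonempty ∧ G.Adj y y'
          · obtain ⟨y, hyI, y', hy'I, hyy', hyfoot, ⟨f', hf'⟩, hadj⟩ := hadjbr
            obtain ⟨f, hf⟩ := hyfoot
            obtain ⟨P, hP, hyE, hBE⟩ := hbridge y hyI f hf
            have hf'B : f' ∈ B := (Finset.mem_inter.1 hf').2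
            have hadjy'f' : G.Adj y' f' :=
              (SimpleGraph.mem_neighborFinset _ _ _).1 (Finset.mem_inter.1 hf').1
            have hy'E : y' ∈ bootClosure G 2 P :=
              two_mem hyE (hBE hf'B) (hIneB y hyI f' hf'B) hadj.symm hadjy'f'
            exact hstar P hP hBE y y' hyE hy'E hyI hy'I hyy'
          · push_neg at hadjbr
            obtain ⟨T₀, hT₀def⟩ : ∃ T₀, T₀ = T.filter (fun t => G.neighborFinset t ∩ B = ∅) :=
              ⟨_, rfl⟩
            have hT₀mem : ∀ t, t ∈ T₀ ↔ t ∈ T ∧ G.neighborFinset t ∩ B = ∅ := by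
              intro t; rw [hT₀def, Finset.mem_filter]
            have hT₀all : ∀ t ∈ T₀, ∀ u ∈ I, u ≠ t → G.Adj t u := by
              intro t ht
              obtain ⟨htT, htB⟩ := (hT₀mem t).1 ht
              apply all_adj
              have hzc : (G.neighborFinset t ∩ B).card = 0 := by rw [htB]; simp
              have hp' := hpart t
              have he : (I.erase t).card = I.card - 1 := Finset.card_erase_of_mem (hTI htT)
              have hd := hTdeg t htT
              omega
            have hT₀I : ∀ t ∈ T₀, t ∈ I := fun t ht => hTI ((hT₀mem t).1 ht).1
            have hx₁notT₀ : x₁ ∉ T₀ := by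
              intro h
              have hz := ((hT₀mem x₁).1 h).2
              have hmem : w₁ ∈ G.neighborFinset x₁ ∩ B :=
                Finset.mem_inter.2
                  ⟨(SimpleGraph.mem_neighborFinset _ _ _).2 hadjw₁x₁.symm, hw₁B⟩
              rw [hz] at hmem
              exact absurd hmem (Finset.notMem_empty w₁)
            have hx₂notT₀ : x₂ ∉ T₀ := by
              intro h
              have hz := ((hT₀mem x₂).1 h).2
              have hmem : w₂ ∈ G.neighborFinset x₂ ∩ B :=
                Finset.mem_inter.2
                  ⟨(SimpleGraph.mem_neighborFinset _ _ _).2 hadjw₂x₂.symm, hw₂B⟩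
              rw [hz] at hmem
              exact absurd hmem (Finset.notMem_empty w₂)
            have hchain : ∀ t₀, t₀ ∈ T₀ → ∀ t₁, t₁ ∈ T₀ → t₀ ≠ t₁ → False := by
              intro t₀ ht₀ t₁ ht₁ hne
              have ht₀I := hT₀I t₀ ht₀
              have ht₁I := hT₀I t₁ ht₁
              have ht₀x₁ : x₁ ≠ t₀ := fun h => hx₁notT₀ (h ▸ ht₀)
              have ht₁x₁ : x₁ ≠ t₁ := fun h => hx₁notT₀ (h ▸ ht₁)
              have ht₀x₂ : x₂ ≠ t₀ := fun h => hx₂notT₀ (h ▸ ht₀)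
              have ht₁x₂ : x₂ ≠ t₁ := fun h => hx₂notT₀ (h ▸ ht₁)
              have ht₀w₁ : t₀ ≠ w₁ := hIneB t₀ ht₀I w₁ hw₁B
              have ht₀E : t₀ ∈ bootClosure G 2 {t₀, w₁} := seed_mem₁
              have hw₁E : w₁ ∈ bootClosure G 2 {t₀, w₁} := seed_mem₂
              have hx₁E : x₁ ∈ bootClosure G 2 {t₀, w₁} :=
                two_mem ht₀E hw₁E ht₀w₁ ((hT₀all t₀ ht₀ x₁ hx₁I ht₀x₁).symm) hadjw₁x₁.symm
              have ht₁E : t₁ ∈ bootClosure G 2 {t₀, w₁} :=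
                two_mem ht₀E hx₁E (fun h => ht₀x₁ h.symm)
                  ((hT₀all t₀ ht₀ t₁ ht₁I (Ne.symm hne)).symm)
                  (hT₀all t₁ ht₁ x₁ hx₁I ht₁x₁)
              have hx₂E : x₂ ∈ bootClosure G 2 {t₀, w₁} :=
                two_mem ht₀E ht₁E hne ((hT₀all t₀ ht₀ x₂ hx₂I ht₀x₂).symm)
                  ((hT₀all t₁ ht₁ x₂ hx₂I ht₁x₂).symm)
              have hw₂E : w₂ ∈ bootClosure G 2 {t₀, w₁} :=
                two_mem hx₂E hw₁E (hIneB x₂ hx₂I w₁ hw₁B) hadjw₂x₂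
                  (hw₂adj w₁ hw₁B hw12)
              have hBE := hBspread _ hw₁E hw₂E
              exact hstar {t₀, w₁} (Finset.card_pair ht₀w₁) hBE t₀ t₁ ht₀E ht₁E ht₀I ht₁I hne
            by_cases hT₀2 : 2 ≤ T₀.card
            · obtain ⟨t₀, ht₀, t₁, ht₁, hne⟩ := Finset.one_lt_card.1 (by omega : 1 < T₀.card)
              exact hchain t₀ ht₀ t₁ ht₁ hne
            · push_neg at hT₀2
              have hmiss : ∀ t ∈ T, ∀ u ∈ I, ∀ u' ∈ I, u ≠ u' → u ≠ t → u' ≠ t →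
                  ¬ G.Adj t u → ¬ G.Adj t u' → False := by
                intro t ht u hu u' hu' huu' hut hu't hnu hnu'
                have htI := hTI ht
                have hsubn : G.neighborFinset t ∩ I ⊆ ((I.erase t).erase u).erase u' := by
                  intro z hz
                  rcases Finset.mem_inter.1 hz with ⟨hz1, hz2⟩
                  have hadj : G.Adj t z := (SimpleGraph.mem_neighborFinset _ _ _).1 hz1
                  refine Finset.mem_erase.2 ⟨?_, Finset.mem_erase.2 ⟨?_,
                    Finset.mem_erase.2 ⟨?_, hz2⟩⟩⟩
                  · rintro rfl; exact hnu' hadj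
                  · rintro rfl; exact hnu hadj
                  · rintro rfl; exact G.irrefl hadj
                have hc1 := Finset.card_le_card hsubn
                have e2 : u ∈ I.erase t := Finset.mem_erase.2 ⟨hut, hu⟩
                have e1 : u' ∈ (I.erase t).erase u :=
                  Finset.mem_erase.2 ⟨fun h => huu' h.symm, Finset.mem_erase.2 ⟨hu't, hu'⟩⟩
                have hc2 : (((I.erase t).erase u).erase u').card = I.card - 3 := by
                  rw [Finset.card_erase_of_mem e1, Finset.card_erase_of_mem e2,
                    Finset.card_erase_of_mem htI]
                  omega
                have hp' := hpart t
                have hd := hTdeg t ht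
                have hb1' := hmulti t htI
                omega
              have hTsub : ∀ t ∈ T, t ∉ T₀ → t = x₁ ∨ t = x₂ := by
                intro t ht htn
                by_contra hcon
                push_neg at hcon
                obtain ⟨hne1, hne2⟩ := hcon
                have htI := hTI ht
                have htfoot : (G.neighborFinset t ∩ B).Nonempty := by
                  rw [Finset.nonempty_iff_ne_empty]
                  intro h
                  exact htn ((hT₀mem t).2 ⟨ht, h⟩)
                have hx₁foot : (G.neighborFinset x₁ ∩ B).Nonempty :=
                  ⟨w₁, Finset.mem_inter.2
                    ⟨(SimpleGraph.mem_neighborFinset _ _ _).2 hadjw₁x₁.symm, hw₁B⟩⟩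
                have hx₂foot : (G.neighborFinset x₂ ∩ B).Nonempty :=
                  ⟨w₂, Finset.mem_inter.2
                    ⟨(SimpleGraph.mem_neighborFinset _ _ _).2 hadjw₂x₂.symm, hw₂B⟩⟩
                have hna1 : ¬ G.Adj t x₁ := hadjbr t htI x₁ hx₁I hne1 htfoot hx₁foot
                have hna2 : ¬ G.Adj t x₂ := hadjbr t htI x₂ hx₂I hne2 htfoot hx₂foot
                exact hmiss t ht x₁ hx₁I x₂ hx₂I hx12 (Ne.symm hne1) (Ne.symm hne2) hna1 hna2
              have hTsub2 : T ⊆ T₀ ∪ {x₁, x₂} := by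
                intro t ht
                by_cases h : t ∈ T₀
                · exact Finset.mem_union_left _ h
                · rcases hTsub t ht h with h1 | h1
                  · exact Finset.mem_union_right _ (by rw [h1]; exact Finset.mem_insert_self _ _)
                  · exact Finset.mem_union_right _ (by rw [h1]; simp)
              have hTcard2 := Finset.card_le_card hTsub2
              have hunion2 := Finset.card_union_le T₀ ({x₁, x₂} : Finset V)
              have hpair2 : ({x₁, x₂} : Finset V).card = 2 := Finset.card_pair hx12
              obtain ⟨t₀, ht₀⟩ := Finset.card_pos.1 (by omega : 0 < T₀.card)
              have hx₁T : x₁ ∈ T := by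
                by_contra h
                have hsub3 : T ⊆ T₀ ∪ {x₂} := by
                  intro t ht
                  by_cases h2 : t ∈ T₀
                  · exact Finset.mem_union_left _ h2
                  · rcases hTsub t ht h2 with h1 | h1
                    · exact absurd (h1 ▸ ht) h
                    · exact Finset.mem_union_right _ (by rw [h1]; simp)
                have hc3 := Finset.card_le_card hsub3
                have hc4 := Finset.card_union_le T₀ ({x₂} : Finset V)
                have hc5 : ({x₂} : Finset V).card = 1 := Finset.card_singleton x₂
                omega
              have hx₂T : x₂ ∈ T := by
                by_contra h
                have hsub3 : T ⊆ T₀ ∪ {x₁} := by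
                  intro t ht
                  by_cases h2 : t ∈ T₀
                  · exact Finset.mem_union_left _ h2
                  · rcases hTsub t ht h2 with h1 | h1
                    · exact Finset.mem_union_right _ (by rw [h1]; simp)
                    · exact absurd (h1 ▸ ht) h
                have hc3 := Finset.card_le_card hsub3
                have hc4 := Finset.card_union_le T₀ ({x₁} : Finset V)
                have hc5 : ({x₁} : Finset V).card = 1 := Finset.card_singleton x₁
                omega
              have hx₁foot : (G.neighborFinset x₁ ∩ B).Nonempty :=
                ⟨w₁, Finset.mem_inter.2
                  ⟨(SimpleGraph.mem_neighborFinset _ _ _).2 hadjw₁x₁.symm, hw₁B⟩⟩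
              have hx₂foot : (G.neighborFinset x₂ ∩ B).Nonempty :=
                ⟨w₂, Finset.mem_inter.2
                  ⟨(SimpleGraph.mem_neighborFinset _ _ _).2 hadjw₂x₂.symm, hw₂B⟩⟩
              have hnadj12 : ¬ G.Adj x₁ x₂ :=
                hadjbr x₁ hx₁I x₂ hx₂I hx12 hx₁foot hx₂foot
              have hx₁adj : ∀ u ∈ I, u ≠ x₁ → u ≠ x₂ → G.Adj x₁ u := by
                intro u hu h1 h2
                by_contra hna
                exact hmiss x₁ hx₁T u hu x₂ hx₂I h2 h1 (Ne.symm hx12) hna hnadj12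
              have hx₂adj : ∀ u ∈ I, u ≠ x₂ → u ≠ x₁ → G.Adj x₂ u := by
                intro u hu h1 h2
                by_contra hna
                exact hmiss x₂ hx₂T u hu x₁ hx₁I h2 h1 hx12 hna (fun h => hnadj12 h.symm)
              have ht₀I := hT₀I t₀ ht₀
              obtain ⟨u, hu⟩ : (I \ {t₀, x₁, x₂}).Nonempty := by
                apply Finset.card_pos.1
                have h1 := Finset.le_card_sdiff ({t₀, x₁, x₂} : Finset V) I
                have h2 : ({t₀, x₁, x₂} : Finset V).card ≤ 3 := by
                  refine le_trans (Finset.card_insert_le _ _) (Nat.succ_le_succ ?_)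
                  exact le_trans (Finset.card_insert_le _ _) (by simp)
                omega
              rcases Finset.mem_sdiff.1 hu with ⟨huI, hunotin⟩
              have hut₀ : u ≠ t₀ := fun h => hunotin (by rw [h]; exact Finset.mem_insert_self _ _)
              have hux₁ : u ≠ x₁ := fun h => hunotin (by rw [h]; simp)
              have hux₂ : u ≠ x₂ := fun h => hunotin (by rw [h]; simp)
              have ht₀x₁ : x₁ ≠ t₀ := fun h => hx₁notT₀ (h ▸ ht₀)
              have ht₀x₂ : x₂ ≠ t₀ := fun h => hx₂notT₀ (h ▸ ht₀)
              have ht₀w₁ : t₀ ≠ w₁ := hIneB t₀ ht₀I w₁ hw₁B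
              have ht₀E : t₀ ∈ bootClosure G 2 {t₀, w₁} := seed_mem₁
              have hw₁E : w₁ ∈ bootClosure G 2 {t₀, w₁} := seed_mem₂
              have hx₁E : x₁ ∈ bootClosure G 2 {t₀, w₁} :=
                two_mem ht₀E hw₁E ht₀w₁ ((hT₀all t₀ ht₀ x₁ hx₁I ht₀x₁).symm) hadjw₁x₁.symm
              have huE : u ∈ bootClosure G 2 {t₀, w₁} :=
                two_mem ht₀E hx₁E (fun h => ht₀x₁ h.symm)
                  ((hT₀all t₀ ht₀ u huI hut₀).symm) ((hx₁adj u huI hux₁ hux₂).symm)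
              have hx₂E : x₂ ∈ bootClosure G 2 {t₀, w₁} :=
                two_mem ht₀E huE (Ne.symm hut₀) ((hT₀all t₀ ht₀ x₂ hx₂I ht₀x₂).symm)
                  (hx₂adj u huI hux₂ hux₁)
              have hw₂E : w₂ ∈ bootClosure G 2 {t₀, w₁} :=
                two_mem hx₂E hw₁E (hIneB x₂ hx₂I w₁ hw₁B) hadjw₂x₂
                  (hw₂adj w₁ hw₁B hw12)
              have hBE := hBspread _ hw₁E hw₂E
              exact hstar {t₀, w₁} (Finset.card_pair ht₀w₁) hBE t₀ x₁ ht₀E hx₁E ht₀I hx₁I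
                (fun h => ht₀x₁ h.symm)
      · -- β : b vertices of degree ≥ n - b
        have hcnt := high_count' G e hmono _ (n - (B.card - 1) - 1) rfl hβ
        obtain ⟨T', hT'def⟩ : ∃ T',
            T' = univ.filter (fun v => n - (B.card - 1) - 1 ≤ G.degree v) := ⟨_, rfl⟩
        have hT'card : B.card ≤ T'.card := by rw [hT'def]; omega
        have hT'mem : ∀ v ∈ T', n - B.card ≤ G.degree v := by
          intro v hv
          rw [hT'def] at hv
          have := (Finset.mem_filter.1 hv).2
          omega
        have hT'I : T' ⊆ I := by
          intro v hv
          by_contra hvI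
          have hvB : v ∈ B := (hmemB v).2 hvI
          have h1 := hBdeg v hvB
          have h2 := hT'mem v hv
          omega
        have hub : univ \ B = I := by
          rw [hBdef, Finset.sdiff_sdiff_self_left, Finset.univ_inter]
        have hT'B : ∀ v ∈ T', 1 ≤ (G.neighborFinset v ∩ B).card := by
          intro v hv
          have h1 := nbr_lower G (X := B) (v := v) (fun h => (hmemB v).1 h (hT'I hv))
          rw [hub] at h1
          have := hT'mem v hv
          omega
        have hsum1 : (∑ v ∈ T', (G.neighborFinset v ∩ B).card) ≤ B.card := by
          calc (∑ v ∈ T', (G.neighborFinset v ∩ B).card)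
              ≤ ∑ v ∈ I, (G.neighborFinset v ∩ B).card := Finset.sum_le_sum_of_subset hT'I
            _ = ∑ w ∈ B, (G.neighborFinset w ∩ I).card := sum_inter_comm G I B
            _ ≤ B.card := heIB
        have hsumlow : T'.card ≤ ∑ v ∈ T', (G.neighborFinset v ∩ B).card := by
          have := Finset.card_nsmul_le_sum T' _ 1 hT'B
          simpa using this
        have hT'eq : T'.card = B.card := by omega
        have hone : ∀ v ∈ T', (G.neighborFinset v ∩ B).card = 1 := by
          intro v hv
          by_contra hne
          have h2 : 2 ≤ (G.neighborFinset v ∩ B).card := by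
            have := hT'B v hv
            omega
          have hsplit : (∑ u ∈ T', (G.neighborFinset u ∩ B).card)
              = (G.neighborFinset v ∩ B).card
                + ∑ u ∈ T'.erase v, (G.neighborFinset u ∩ B).card :=
            (Finset.add_sum_erase T' _ hv).symm
          have hrest : (T'.erase v).card ≤ ∑ u ∈ T'.erase v, (G.neighborFinset u ∩ B).card := by
            have := Finset.card_nsmul_le_sum (T'.erase v) _ 1
              (fun u hu => hT'B u (Finset.mem_of_mem_erase hu))
            simpa using this
          have hcerase : (T'.erase v).card = T'.card - 1 := Finset.card_erase_of_mem hv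
          omega
        have hT'sum : (∑ u ∈ T', (G.neighborFinset u ∩ B).card) = T'.card := by
          rw [Finset.sum_congr rfl hone]
          simp
        have hzero : ∀ v, v ∈ I → v ∉ T' → (G.neighborFinset v ∩ B).card = 0 := by
          intro v hvI hvT
          by_contra hne
          have h1 : 1 ≤ (G.neighborFinset v ∩ B).card := by omega
          have hsplitI : (∑ u ∈ I, (G.neighborFinset u ∩ B).card)
              = (G.neighborFinset v ∩ B).card
                + ∑ u ∈ I.erase v, (G.neighborFinset u ∩ B).card :=
            (Finset.add_sum_erase I _ hvI).symm
          have hsub2 : T' ⊆ I.erase v := by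
            intro u hu
            exact Finset.mem_erase.2 ⟨fun h => hvT (h ▸ hu), hT'I hu⟩
          have hrest : (∑ u ∈ T', (G.neighborFinset u ∩ B).card)
              ≤ ∑ u ∈ I.erase v, (G.neighborFinset u ∩ B).card :=
            Finset.sum_le_sum_of_subset hsub2
          have hIeq : (∑ u ∈ I, (G.neighborFinset u ∩ B).card) ≤ B.card := by
            rw [sum_inter_comm G I B]; exact heIB
          omega
        have hwone : ∀ w ∈ B, (G.neighborFinset w ∩ I).card = 1 := by
          intro w hw
          by_contra hne
          have h0 : (G.neighborFinset w ∩ I).card = 0 := by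
            have := hclosedI w ((hmemB w).1 hw)
            omega
          have hBsum : (∑ u ∈ B, (G.neighborFinset u ∩ I).card)
              = (G.neighborFinset w ∩ I).card
                + ∑ u ∈ B.erase w, (G.neighborFinset u ∩ I).card :=
            (Finset.add_sum_erase B _ hw).symm
          have hrest : ∑ u ∈ B.erase w, (G.neighborFinset u ∩ I).card ≤ (B.erase w).card := by
            calc (∑ u ∈ B.erase w, (G.neighborFinset u ∩ I).card)
                ≤ ∑ _u ∈ B.erase w, 1 := Finset.sum_le_sum
                  (fun u hu => hclosedI u ((hmemB u).1 (Finset.mem_of_mem_erase hu)))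
              _ = (B.erase w).card := by simp
          have hcerase : (B.erase w).card = B.card - 1 := Finset.card_erase_of_mem hw
          have hle2 : (∑ u ∈ T', (G.neighborFinset u ∩ B).card)
              ≤ ∑ u ∈ I, (G.neighborFinset u ∩ B).card := Finset.sum_le_sum_of_subset hT'I
          have hcomm : (∑ u ∈ I, (G.neighborFinset u ∩ B).card)
              = ∑ u ∈ B, (G.neighborFinset u ∩ I).card := sum_inter_comm G I B
          omega
        have hT'all : ∀ v ∈ T', ∀ u ∈ I, u ≠ v → G.Adj v u := by
          intro v hv
          apply all_adj
          have hp' := hpart v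
          have he : (I.erase v).card = I.card - 1 := Finset.card_erase_of_mem (hT'I hv)
          have h1 := hone v hv
          have h2 := hT'mem v hv
          omega
        have hfoot : ∀ y, y ∈ I → ∀ z, z ∈ B → G.Adj y z → y ∈ T' := by
          intro y hyI z hzB hadj
          by_contra hc
          have h0 := hzero y hyI hc
          rw [Finset.card_eq_zero] at h0
          have hmem : z ∈ G.neighborFinset y ∩ B :=
            Finset.mem_inter.2 ⟨(SimpleGraph.mem_neighborFinset _ _ _).2 hadj, hzB⟩
          rw [h0] at hmem
          exact absurd hmem (Finset.notMem_empty z)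
        by_cases hBedge : ∃ w ∈ B, ∃ w' ∈ B, G.Adj w w'
        · obtain ⟨w, hw, w', hw', hww'⟩ := hBedge
          obtain ⟨x, hx⟩ := Finset.card_eq_one.1 (hwone w hw)
          obtain ⟨x', hx'⟩ := Finset.card_eq_one.1 (hwone w' hw')
          have hxmem : x ∈ G.neighborFinset w ∩ I := by
            rw [hx]; exact Finset.mem_singleton_self x
          have hx'mem : x' ∈ G.neighborFinset w' ∩ I := by
            rw [hx']; exact Finset.mem_singleton_self x'
          have hxI : x ∈ I := (Finset.mem_inter.1 hxmem).2
          have hx'I : x' ∈ I := (Finset.mem_inter.1 hx'mem).2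
          have hadjwx : G.Adj w x :=
            (SimpleGraph.mem_neighborFinset _ _ _).1 (Finset.mem_inter.1 hxmem).1
          have hadjw'x' : G.Adj w' x' :=
            (SimpleGraph.mem_neighborFinset _ _ _).1 (Finset.mem_inter.1 hx'mem).1
          have hww'ne : w ≠ w' := fun hh => G.irrefl (hh ▸ hww')
          have hxT' := hfoot x hxI w hw hadjwx.symm
          have hx'T' := hfoot x' hx'I w' hw' hadjw'x'.symm
          have hxx' : x ≠ x' := by
            intro h
            subst h
            have hsub : ({w, w'} : Finset V) ⊆ G.neighborFinset x ∩ B := by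
              intro z hz
              rcases Finset.mem_insert.1 hz with hzz | hzz
              · subst hzz
                exact Finset.mem_inter.2
                  ⟨(SimpleGraph.mem_neighborFinset _ _ _).2 hadjwx.symm, hw⟩
              · rw [Finset.mem_singleton] at hzz; subst hzz
                exact Finset.mem_inter.2
                  ⟨(SimpleGraph.mem_neighborFinset _ _ _).2 hadjw'x'.symm, hw'⟩
            have hc := Finset.card_le_card hsub
            rw [Finset.card_pair hww'ne] at hc
            have := hone x hxT'
            omega
          have hx'w : x' ≠ w := hIneB x' hx'I w hw
          have hx'E : x' ∈ bootClosure G 2 {x', w} := seed_mem₁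
          have hwE : w ∈ bootClosure G 2 {x', w} := seed_mem₂
          have hxE : x ∈ bootClosure G 2 {x', w} :=
            two_mem hx'E hwE hx'w ((hT'all x' hx'T' x hxI hxx').symm) hadjwx.symm
          have hw'E : w' ∈ bootClosure G 2 {x', w} :=
            two_mem hx'E hwE hx'w hadjw'x' hww'.symm
          have hIE : ∀ u, u ∈ I → u ∈ bootClosure G 2 {x', w} := by
            intro u hu
            by_cases h1 : u = x'
            · rw [h1]; exact hx'E
            · by_cases h2 : u = x
              · rw [h2]; exact hxE
              · exact two_mem hxE hx'E hxx'
                  ((hT'all x hxT' u hu h2).symm) ((hT'all x' hx'T' u hu h1).symm)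
          have hsubE : I ∪ {w, w'} ⊆ bootClosure G 2 {x', w} := by
            intro z hz
            rcases Finset.mem_union.1 hz with h | h
            · exact hIE z h
            · rcases Finset.mem_insert.1 h with h | h
              · rw [h]; exact hwE
              · rw [Finset.mem_singleton] at h; rw [h]; exact hw'E
          have hcardE : I.card + 2 ≤ (bootClosure G 2 {x', w}).card := by
            have h1 := Finset.card_le_card hsubE
            have h2 : (I ∪ {w, w'}).card = I.card + 2 := by
              rw [Finset.card_union_of_disjoint]
              · rw [Finset.card_pair hww'ne]
              · rw [Finset.disjoint_left]
                intro a haI ha2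
                rcases Finset.mem_insert.1 ha2 with h | h
                · exact (hmemB w).1 hw (h ▸ haI)
                · rw [Finset.mem_singleton] at h
                  exact (hmemB w').1 hw' (h ▸ haI)
            omega
          have hx'L : x' ∈ L := hLmem x' (by have := hT'mem x' hx'T'; omega)
          exact max_contra {x', w} (Finset.card_pair hx'w) x' hx'E hx'L (by omega)
        · push_neg at hBedge
          have hdegB1 : ∀ w ∈ B, G.degree w = 1 := by
            intro w hw
            have h1 := hpart w
            have h2 := hwone w hw
            have h3 : (G.neighborFinset w ∩ B).card = 0 := by
              rw [Finset.card_eq_zero, Finset.eq_empty_iff_forall_notMem]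
              intro z hz
              rcases Finset.mem_inter.1 hz with ⟨hz1, hz2⟩
              exact hBedge w hw z hz2 ((SimpleGraph.mem_neighborFinset _ _ _).1 hz1)
            omega
          obtain ⟨w, hw, w', hw', hww'⟩ := Finset.one_lt_card.1 (by omega : 1 < B.card)
          have hsubd : ({w, w'} : Finset V) ⊆ univ.filter (fun v => G.degree v = 1) := by
            intro z hz
            simp only [Finset.mem_filter, Finset.mem_univ, true_and]
            rcases Finset.mem_insert.1 hz with h | h
            · rw [h]; exact hdegB1 w hw
            · rw [Finset.mem_singleton] at h; rw [h]; exact hdegB1 w' hw'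
          have := Finset.card_le_card hsubd
          rw [Finset.card_pair hww'] at this
          omega
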